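/- Every finitely connected circle domain V in the Riemann sphere is 1-LLC: for every open or closed round disk B in Ĉ, the set B ∩ V is path-connected. Consequently both LLC conditions hold with constant λ = 1: any two points of V within a ball B(a,r) can be joined by a continuum in V ∩ B(a,r), and any two points of V outside a ball B(a,r) can be joined by a continuum in V avoiding B(a,r). -/

import Mathlib

open Metric Set Real
open scoped RealInnerProductSpace

noncomputable section
namespace CircleLLC


/-- concave quadratic function on the plane `ℂ` -/
def qf (A : ℝ) (b : ℂ) (C : ℝ) (w : ℂ) : ℝ :=
  A * Complex.normSq w + (b.re * w.re + b.im * w.im) + C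

lemma qf_lerp (A : ℝ) (b : ℂ) (C : ℝ) (x y : ℂ) (t : ℝ) :
    qf A b C (x + t • (y - x)) =
      (1 - t) * qf A b C x + t * qf A b C y - A * (t * (1 - t)) * Complex.normSq (y - x) := by
  simp only [qf, Complex.normSq_apply, Complex.add_re, Complex.add_im, Complex.real_smul,
    Complex.mul_re, Complex.mul_im, Complex.sub_re, Complex.sub_im, Complex.ofReal_re,
    Complex.ofReal_im]
  ring

lemma qf_min_lerp {A : ℝ} (hA : A ≤ 0) (b : ℂ) (C : ℝ) (x y : ℂ) {t : ℝ}
    (ht : t ∈ Icc (0:ℝ) 1) : min (qf A b C x) (qf A b C y) ≤ qf A b C (x + t • (y - x)) := by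
  obtain ⟨h0, h1⟩ := ht
  rw [qf_lerp]
  have hns : 0 ≤ Complex.normSq (y - x) := Complex.normSq_nonneg _
  rcases le_total (qf A b C x) (qf A b C y) with h | h
  · rw [min_eq_left h]
    nlinarith [mul_nonneg h0 (sub_nonneg.mpr h), mul_nonneg (mul_nonneg h0 (by linarith : (0:ℝ) ≤ 1 - t)) hns]
  · rw [min_eq_right h]
    nlinarith [mul_nonneg (by linarith : (0:ℝ) ≤ 1 - t) (sub_nonneg.mpr h), mul_nonneg (mul_nonneg h0 (by linarith : (0:ℝ) ≤ 1 - t)) hns]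

/-- point on circle of center `z`, radius `R`, angle `θ` -/
def circ (z : ℂ) (R θ : ℝ) : ℂ := z + (R : ℂ) * Complex.exp (θ * Complex.I)

lemma circ_re (z : ℂ) (R θ : ℝ) : (circ z R θ).re = z.re + R * Real.cos θ := by
  simp [circ, Complex.exp_ofReal_mul_I_re, Complex.exp_ofReal_mul_I_im, Complex.mul_re]

lemma circ_im (z : ℂ) (R θ : ℝ) : (circ z R θ).im = z.im + R * Real.sin θ := by
  simp [circ, Complex.exp_ofReal_mul_I_re, Complex.exp_ofReal_mul_I_im, Complex.mul_im]

lemma circ_dist (z : ℂ) (R θ : ℝ) : dist (circ z R θ) z = |R| := by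
  simp [circ, Complex.dist_eq, add_sub_cancel_left, map_mul, Complex.norm_exp_ofReal_mul_I,
    Complex.norm_real]

lemma circ_continuous (z : ℂ) (R : ℝ) : Continuous (fun θ : ℝ => circ z R θ) := by
  unfold circ
  fun_prop

lemma qf_circ (A : ℝ) (b : ℂ) (C : ℝ) (z : ℂ) (R θ : ℝ) :
    qf A b C (circ z R θ) = (qf A b C z + A * R ^ 2) +
      R * ((2 * A * z.re + b.re) * Real.cos θ + (2 * A * z.im + b.im) * Real.sin θ) := by
  simp only [qf, Complex.normSq_apply, circ_re, circ_im]
  linear_combination (A * R ^ 2) * (Real.sin_sq_add_cos_sq θ)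

lemma exists_angle (z : ℂ) {R : ℝ} (hR : 0 < R) {w : ℂ} (hw : dist w z = R) (φ : ℝ) :
    ∃ θ ∈ Icc (φ - π) (φ + π), w = circ z R θ := by
  set u : ℂ := (w - z) * Complex.exp (-(φ:ℝ) * Complex.I) with hu
  have he1 : ‖Complex.exp (-(φ:ℝ) * Complex.I)‖ = 1 := by
    rw [show (-(φ:ℝ) : ℂ) * Complex.I = ((-φ : ℝ) : ℂ) * Complex.I by push_cast; ring,
      Complex.norm_exp_ofReal_mul_I]
  have habs : ‖u‖ = R := by
    rw [hu, norm_mul, he1, mul_one, ← Complex.dist_eq, hw]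
  have harg := Complex.arg_mem_Ioc u
  refine ⟨φ + u.arg, ⟨by linarith [harg.1], by linarith [harg.2]⟩, ?_⟩
  have h1 : (‖u‖ : ℂ) * Complex.exp (u.arg * Complex.I) = u :=
    Complex.norm_mul_exp_arg_mul_I u
  rw [habs] at h1
  have h2 : w - z = (R : ℂ) * Complex.exp (u.arg * Complex.I) * Complex.exp ((φ:ℝ) * Complex.I) := by
    rw [h1, hu, mul_assoc, ← Complex.exp_add]
    rw [show (-(φ:ℝ) : ℂ) * Complex.I + (φ:ℝ) * Complex.I = 0 by ring, Complex.exp_zero, mul_one]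
  rw [circ]
  rw [show ((φ + u.arg : ℝ) : ℂ) = (φ : ℂ) + (u.arg : ℂ) by push_cast; ring]
  rw [show ((φ:ℂ) + (u.arg:ℂ)) * Complex.I = (u.arg:ℝ) * Complex.I + (φ:ℝ) * Complex.I by push_cast; ring]
  rw [Complex.exp_add, ← mul_assoc]
  rw [← h2]; ring

lemma cos_min {s s₁ s₂ : ℝ} (h1 : s₁ ≤ s) (h2 : s ≤ s₂) (hl : -π ≤ s₁) (hr : s₂ ≤ π) :
    min (Real.cos s₁) (Real.cos s₂) ≤ Real.cos s := by
  have habs : |s| ≤ max |s₁| |s₂| := by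
    rcases le_or_gt 0 s with h | h
    · refine le_trans ?_ (le_max_right _ _)
      rw [abs_of_nonneg h]; exact le_trans h2 (le_abs_self _)
    · refine le_trans ?_ (le_max_left _ _)
      rw [abs_of_neg h]; exact le_trans (neg_le_neg h1) (neg_le_abs _)
  have hmaxpi : max |s₁| |s₂| ≤ π := by
    rw [max_le_iff]
    constructor <;> rw [abs_le] <;> constructor <;> linarith
  have hc : Real.cos (max |s₁| |s₂|) ≤ Real.cos |s| :=
    Real.cos_le_cos_of_nonneg_of_le_pi (abs_nonneg _) hmaxpi habs
  have hmin : min (Real.cos s₁) (Real.cos s₂) ≤ Real.cos (max |s₁| |s₂|) := by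
    rcases max_cases |s₁| |s₂| with ⟨he, _⟩ | ⟨he, _⟩ <;> rw [he, Real.cos_abs]
    · exact min_le_left _ _
    · exact min_le_right _ _
  calc min (Real.cos s₁) (Real.cos s₂) ≤ Real.cos |s| := le_trans hmin hc
    _ = Real.cos s := Real.cos_abs s



/-- going along an arc of a circle, a (concave) quadratic stays above the min of its
endpoint values -/
lemma arc_joined (A : ℝ) (b : ℂ) (C : ℝ) (z : ℂ) {R : ℝ} (hR : 0 < R) {w₁ w₂ : ℂ}
    (h₁ : dist w₁ z = R) (h₂ : dist w₂ z = R) :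
    JoinedIn {w : ℂ | dist w z = R ∧ min (qf A b C w₁) (qf A b C w₂) ≤ qf A b C w} w₁ w₂ := by
  set δ : ℂ := (2 * A : ℝ) • z + b with hδ
  set φ := δ.arg with hφ
  obtain ⟨θ₁, hθ₁, he₁⟩ := exists_angle z hR h₁ φ
  obtain ⟨θ₂, hθ₂, he₂⟩ := exists_angle z hR h₂ φ
  -- the quadratic along the circle
  have key : ∀ θ, θ ∈ Icc (min θ₁ θ₂) (max θ₁ θ₂) →
      min (qf A b C w₁) (qf A b C w₂) ≤ qf A b C (circ z R θ) := by
    intro θ hθ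
    have hre : δ.re = 2 * A * z.re + b.re := by
      simp [hδ, Complex.add_re, Complex.real_smul, Complex.mul_re]
    have him : δ.im = 2 * A * z.im + b.im := by
      simp [hδ, Complex.add_im, Complex.real_smul, Complex.mul_im]
    have habscos : ∀ θ' : ℝ, ‖δ‖ * Real.cos (θ' - φ) =
        δ.re * Real.cos θ' + δ.im * Real.sin θ' := by
      intro θ'
      rcases eq_or_ne δ 0 with h0 | h0
      · simp [h0]
      · have hcos : Real.cos φ = δ.re / ‖δ‖ := Complex.cos_arg h0
        have hsin : Real.sin φ = δ.im / ‖δ‖ := Complex.sin_arg δ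
        have habs : (‖δ‖ : ℝ) ≠ 0 := by
          simpa using norm_ne_zero_iff.mpr h0
        rw [Real.cos_sub, hcos, hsin]
        field_simp
    have hval : ∀ θ' : ℝ, qf A b C (circ z R θ') =
        (qf A b C z + A * R ^ 2) + R * (‖δ‖ * Real.cos (θ' - φ)) := by
      intro θ'
      rw [qf_circ, ← hre, ← him, habscos]
    have hmincos : min (Real.cos (θ₁ - φ)) (Real.cos (θ₂ - φ)) ≤ Real.cos (θ - φ) := by
      rcases le_total θ₁ θ₂ with hle | hle
      · have := cos_min (s := θ - φ) (s₁ := θ₁ - φ) (s₂ := θ₂ - φ)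
          (by rcases hθ with ⟨h, _⟩; simp [min_eq_left hle] at h; linarith)
          (by rcases hθ with ⟨_, h⟩; simp [max_eq_right hle] at h; linarith)
          (by linarith [hθ₁.1]) (by linarith [hθ₂.2])
        exact this
      · have := cos_min (s := θ - φ) (s₁ := θ₂ - φ) (s₂ := θ₁ - φ)
          (by rcases hθ with ⟨h, _⟩; simp [min_eq_right hle] at h; linarith)
          (by rcases hθ with ⟨_, h⟩; simp [max_eq_left hle] at h; linarith)
          (by linarith [hθ₂.1]) (by linarith [hθ₁.2])
        rw [min_comm] at this
        exact this
    rw [hval θ, he₁, he₂, hval θ₁, hval θ₂]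
    have habsnn : 0 ≤ ‖δ‖ := norm_nonneg δ
    rcases le_total (Real.cos (θ₁ - φ)) (Real.cos (θ₂ - φ)) with hc | hc
    · rw [min_eq_left hc] at hmincos
      have : min ((qf A b C z + A * R ^ 2) + R * (‖δ‖ * Real.cos (θ₁ - φ)))
          ((qf A b C z + A * R ^ 2) + R * (‖δ‖ * Real.cos (θ₂ - φ))) ≤
          (qf A b C z + A * R ^ 2) + R * (‖δ‖ * Real.cos (θ₁ - φ)) := min_le_left _ _
      refine le_trans this ?_
      have := mul_le_mul_of_nonneg_left (mul_le_mul_of_nonneg_left hmincos habsnn) hR.le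
      linarith
    · rw [min_eq_right hc] at hmincos
      refine le_trans (min_le_right _ _) ?_
      have := mul_le_mul_of_nonneg_left (mul_le_mul_of_nonneg_left hmincos habsnn) hR.le
      linarith
  -- build the path
  refine ⟨⟨⟨fun t : unitInterval => circ z R (θ₁ + (t : ℝ) * (θ₂ - θ₁)), ?_⟩, ?_, ?_⟩, ?_⟩
  · exact (circ_continuous z R).comp
      (continuous_const.add (continuous_subtype_val.mul continuous_const))
  · show circ z R (θ₁ + ((0 : unitInterval) : ℝ) * (θ₂ - θ₁)) = w₁
    rw [he₁]; norm_num
  · show circ z R (θ₁ + ((1 : unitInterval) : ℝ) * (θ₂ - θ₁)) = w₂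
    rw [he₂]; norm_num
  · intro t
    have ht0 : (0:ℝ) ≤ (t:ℝ) := t.2.1
    have ht1 : (t:ℝ) ≤ 1 := t.2.2
    have hmem : θ₁ + (t : ℝ) * (θ₂ - θ₁) ∈ Icc (min θ₁ θ₂) (max θ₁ θ₂) := by
      rcases le_total θ₁ θ₂ with h | h
      · rw [min_eq_left h, max_eq_right h]; constructor <;> nlinarith
      · rw [min_eq_right h, max_eq_left h]; constructor <;> nlinarith
    show circ z R (θ₁ + (t : ℝ) * (θ₂ - θ₁)) ∈ {w : ℂ | dist w z = R ∧ _}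
    exact ⟨by rw [circ_dist]; exact abs_of_pos hR, key _ hmem⟩



/-- joining two points of a (sub)segment inside a set containing it -/
lemma seg_joined {x y : ℂ} {t₁ t₂ : ℝ} (hle : t₁ ≤ t₂) {S : Set ℂ}
    (hmem : ∀ t ∈ Icc t₁ t₂, AffineMap.lineMap (k := ℝ) x y t ∈ S) :
    JoinedIn S (AffineMap.lineMap (k := ℝ) x y t₁) (AffineMap.lineMap (k := ℝ) x y t₂) := by
  refine ⟨⟨⟨fun u : unitInterval => AffineMap.lineMap (k := ℝ) x y (t₁ + (u : ℝ) * (t₂ - t₁)), ?_⟩,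
    ?_, ?_⟩, ?_⟩
  · exact (AffineMap.lineMap_continuous).comp
      (continuous_const.add (continuous_subtype_val.mul continuous_const))
  · show AffineMap.lineMap (k := ℝ) x y (t₁ + ((0:unitInterval) : ℝ) * (t₂ - t₁)) = _
    norm_num
  · show AffineMap.lineMap (k := ℝ) x y (t₁ + ((1:unitInterval) : ℝ) * (t₂ - t₁)) = _
    norm_num
  · intro u
    have h0 : (0:ℝ) ≤ (u:ℝ) := u.2.1
    have h1 : (u:ℝ) ≤ 1 := u.2.2
    exact hmem _ ⟨by nlinarith, by nlinarith⟩

lemma sInf_not_mem_of_isOpen {U : Set ℝ} (hU : IsOpen U) (hne : U.Nonempty)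
    (hb : BddBelow U) : sInf U ∉ U := by
  intro h
  obtain ⟨ε, hε, hball⟩ := Metric.isOpen_iff.mp hU _ h
  have : sInf U - ε / 2 ∈ U := by
    apply hball
    rw [mem_ball, Real.dist_eq, abs_of_nonpos (by linarith)]
    linarith
  have := csInf_le hb this
  linarith

lemma sSup_not_mem_of_isOpen {U : Set ℝ} (hU : IsOpen U) (hne : U.Nonempty)
    (hb : BddAbove U) : sSup U ∉ U := by
  intro h
  obtain ⟨ε, hε, hball⟩ := Metric.isOpen_iff.mp hU _ h
  have : sSup U + ε / 2 ∈ U := by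
    apply hball
    rw [mem_ball, Real.dist_eq, abs_of_nonneg (by linarith)]
    linarith
  have := le_csSup hb this
  linarith

/-- The core induction: joining two points of `C` avoiding finitely many pairwise
disjoint open balls, where `C` is convex and meets every circle in an "arc". -/
lemma core {ι : Type*} [Fintype ι] [DecidableEq ι] {C : Set ℂ} (hC : Convex ℝ C)
    (harc : ∀ (z : ℂ) (R : ℝ), 0 < R → ∀ w₁ w₂, w₁ ∈ sphere z R ∩ C → w₂ ∈ sphere z R ∩ C →
      JoinedIn (sphere z R ∩ C) w₁ w₂)
    (z : ι → ℂ) (R : ι → ℝ) (hR : ∀ i, 0 < R i)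
    (hd : Pairwise (Function.onFun Disjoint fun i => ball (z i) (R i))) :
    ∀ (s : Finset ι) (x y : ℂ), x ∈ C → y ∈ C → (∀ i, x ∉ ball (z i) (R i)) →
      (∀ i, y ∉ ball (z i) (R i)) →
      (∀ i ∉ s, ∀ t ∈ Icc (0:ℝ) 1, AffineMap.lineMap (k := ℝ) x y t ∉ ball (z i) (R i)) →
      JoinedIn (C \ ⋃ i, ball (z i) (R i)) x y := by
  intro s
  induction s using Finset.strongInduction with
  | _ s ih =>
  intro x y hx hy hxb hyb hout
  classical
  set γ : ℝ → ℂ := fun t => AffineMap.lineMap (k := ℝ) x y t with hγ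
  have hγc : Continuous γ := AffineMap.lineMap_continuous
  have hγ0 : γ 0 = x := AffineMap.lineMap_apply_zero x y
  have hγ1 : γ 1 = y := AffineMap.lineMap_apply_one x y
  have hγC : ∀ t ∈ Icc (0:ℝ) 1, γ t ∈ C := by
    intro t ht
    have : γ t ∈ segment ℝ x y := by
      rw [segment_eq_image_lineMap]
      exact ⟨t, ht, rfl⟩
    exact hC.segment_subset hx hy this
  by_cases hseg : ∀ i, ∀ t ∈ Icc (0:ℝ) 1, γ t ∉ ball (z i) (R i)
  · -- straight segment works
    have := seg_joined (x := x) (y := y) (t₁ := (0:ℝ)) (t₂ := 1) zero_le_one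
      (S := C \ ⋃ i, ball (z i) (R i)) ?_
    · rwa [show AffineMap.lineMap (k := ℝ) x y (0:ℝ) = x from hγ0,
        show AffineMap.lineMap (k := ℝ) x y (1:ℝ) = y from hγ1] at this
    · intro t ht
      refine ⟨hγC t ht, ?_⟩
      rw [mem_iUnion]; rintro ⟨i, hi⟩; exact hseg i t ht hi
  · push_neg at hseg
    obtain ⟨i₁, t₀, ht₀, hmem₀⟩ := hseg
    set H : ι → Set ℝ := fun i => Ioo (0:ℝ) 1 ∩ γ ⁻¹' ball (z i) (R i) with hH
    have hHopen : ∀ i, IsOpen (H i) := fun i =>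
      isOpen_Ioo.inter ((isOpen_ball).preimage hγc)
    have hHconv : ∀ i, Convex ℝ (H i) := by
      intro i
      exact (convex_Ioo 0 1).inter ((convex_ball (z i) (R i)).affine_preimage _)
    have hHsub : ∀ i, H i ⊆ Ioo 0 1 := fun i => inter_subset_left
    have hHbb : ∀ i, BddBelow (H i) := fun i => ⟨0, fun t ht => ((hHsub i) ht).1.le⟩
    have hHba : ∀ i, BddAbove (H i) := fun i => ⟨1, fun t ht => ((hHsub i) ht).2.le⟩
    -- properties of inf and sup of the hitting sets
    have hkey : ∀ i, (H i).Nonempty →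
        (0 ≤ sInf (H i) ∧ sInf (H i) < 1 ∧ 0 < sSup (H i) ∧ sSup (H i) ≤ 1 ∧
          sInf (H i) ≤ sSup (H i)) ∧ (sInf (H i) ∉ H i ∧ sSup (H i) ∉ H i) ∧
        (γ (sInf (H i)) ∈ sphere (z i) (R i) ∩ C ∧ γ (sSup (H i)) ∈ sphere (z i) (R i) ∩ C) := by
      intro i hne
      obtain ⟨t, htH⟩ := hne
      have ht01 := hHsub i htH
      have ha0 : 0 ≤ sInf (H i) := le_csInf ⟨t, htH⟩ fun u hu => ((hHsub i) hu).1.le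
      have ha1 : sInf (H i) < 1 := lt_of_le_of_lt (csInf_le (hHbb i) htH) ht01.2
      have hb1 : sSup (H i) ≤ 1 := csSup_le ⟨t, htH⟩ fun u hu => ((hHsub i) hu).2.le
      have hb0 : 0 < sSup (H i) := lt_of_lt_of_le ht01.1 (le_csSup (hHba i) htH)
      have hab : sInf (H i) ≤ sSup (H i) := csInf_le_csSup ⟨t, htH⟩ (hHbb i) (hHba i)
      have hanot : sInf (H i) ∉ H i := sInf_not_mem_of_isOpen (hHopen i) ⟨t, htH⟩ (hHbb i)
      have hbnot : sSup (H i) ∉ H i := sSup_not_mem_of_isOpen (hHopen i) ⟨t, htH⟩ (hHba i)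
      have hnotball : ∀ u, 0 ≤ u → u ≤ 1 → u ∉ H i → γ u ∉ ball (z i) (R i) := by
        intro u hu0 hu1 hun hball
        rcases eq_or_lt_of_le hu0 with h | h
        · rw [← h, hγ0] at hball; exact hxb i hball
        rcases eq_or_lt_of_le hu1 with h' | h'
        · rw [h', hγ1] at hball; exact hyb i hball
        exact hun ⟨⟨h, h'⟩, hball⟩
      have hcb : ∀ u, u ∈ closure (H i) → γ u ∈ closedBall (z i) (R i) := by
        intro u hu
        have h1 : closure (H i) ⊆ closure (γ ⁻¹' ball (z i) (R i)) :=
          closure_mono inter_subset_right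
        have h2 : closure (γ ⁻¹' ball (z i) (R i)) ⊆ γ ⁻¹' closure (ball (z i) (R i)) :=
          hγc.closure_preimage_subset _
        have := h2 (h1 hu)
        rwa [closure_ball (z i) (hR i).ne', mem_preimage] at this
      have hsphmem : ∀ u, u ∈ closure (H i) → 0 ≤ u → u ≤ 1 → u ∉ H i →
          γ u ∈ sphere (z i) (R i) ∩ C := by
        intro u hu h0 h1 hn
        refine ⟨?_, hγC u ⟨h0, h1⟩⟩
        rw [mem_sphere]
        exact le_antisymm (mem_closedBall.mp (hcb u hu))
          (not_lt.mp fun h => (hnotball u h0 h1 hn) (mem_ball.mpr h))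
      exact ⟨⟨ha0, ha1, hb0, hb1, hab⟩, ⟨hanot, hbnot⟩,
        hsphmem _ (csInf_mem_closure ⟨t, htH⟩ (hHbb i)) ha0 (le_of_lt ha1) hanot,
        hsphmem _ (csSup_mem_closure ⟨t, htH⟩ (hHba i)) (le_of_lt hb0) hb1 hbnot⟩
    -- the hit set is nonempty for i₁
    have hi₁H : (H i₁).Nonempty := by
      refine ⟨t₀, ⟨?_, hmem₀⟩⟩
      rcases eq_or_lt_of_le ht₀.1 with h | h
      · rw [← h, hγ0] at hmem₀; exact absurd hmem₀ (hxb i₁)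
      rcases eq_or_lt_of_le ht₀.2 with h' | h'
      · rw [h', hγ1] at hmem₀; exact absurd hmem₀ (hyb i₁)
      exact ⟨h, h'⟩
    set J : Finset ι := Finset.univ.filter (fun i => (H i).Nonempty) with hJ
    have hi₁J : i₁ ∈ J := by rw [hJ, Finset.mem_filter]; exact ⟨Finset.mem_univ _, hi₁H⟩
    obtain ⟨i₀, hi₀J, hmin⟩ := J.exists_min_image (fun i => sInf (H i)) ⟨i₁, hi₁J⟩
    have hi₀H : (H i₀).Nonempty := (Finset.mem_filter.mp hi₀J).2
    obtain ⟨⟨ha0, ha1, hb0, hb1, hab⟩, ⟨hanot, hbnot⟩, hamem, hbmem⟩ := hkey i₀ hi₀H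
    have hi₀s : i₀ ∈ s := by
      by_contra hns
      obtain ⟨t, htH⟩ := hi₀H
      exact hout i₀ hns t ⟨((hHsub i₀) htH).1.le, ((hHsub i₀) htH).2.le⟩ htH.2
    -- points of a circle avoid all the balls
    have hsph : ∀ i, sphere (z i) (R i) ∩ C ⊆ C \ ⋃ j, ball (z j) (R j) := by
      rintro i w ⟨hws, hwC⟩
      refine ⟨hwC, ?_⟩
      rw [mem_iUnion]
      rintro ⟨j, hj⟩
      rcases eq_or_ne j i with rfl | hne
      · rw [mem_sphere] at hws; rw [mem_ball, hws] at hj; exact lt_irrefl _ hj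
      · have hwc : w ∈ closure (ball (z i) (R i)) := by
          rw [closure_ball (z i) (hR i).ne']
          exact sphere_subset_closedBall hws
        have := (isOpen_ball).inter_closure (t := ball (z i) (R i)) ⟨hj, hwc⟩
        rw [Set.disjoint_iff_inter_eq_empty.mp (hd hne), closure_empty] at this
        exact this
    -- piece 1 : segment from x to γ (sInf (H i₀))
    have piece1 : JoinedIn (C \ ⋃ j, ball (z j) (R j)) x (γ (sInf (H i₀))) := by
      have := seg_joined (x := x) (y := y) (hle := ha0)
        (S := C \ ⋃ j, ball (z j) (R j)) ?_
      · rwa [show AffineMap.lineMap (k := ℝ) x y (0:ℝ) = x from hγ0] at this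
      · intro t ht
        have ht1 : t ≤ 1 := le_trans ht.2 ha1.le
        refine ⟨hγC t ⟨ht.1, ht1⟩, ?_⟩
        rw [mem_iUnion]
        rintro ⟨j, hj⟩
        have htIoo : t ∈ Ioo (0:ℝ) 1 := by
          constructor
          · rcases eq_or_lt_of_le ht.1 with h | h
            · exfalso; apply hxb j; rw [← hγ0, h]; exact hj
            · exact h
          · rcases eq_or_lt_of_le ht1 with h | h
            · exfalso; apply hyb j; rw [← hγ1, ← h]; exact hj
            · exact h
        have htHj : t ∈ H j := ⟨htIoo, hj⟩
        by_cases hjs : j ∈ s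
        · have hjJ : j ∈ J := by rw [hJ, Finset.mem_filter]; exact ⟨Finset.mem_univ _, ⟨t, htHj⟩⟩
          have h1 : sInf (H i₀) ≤ sInf (H j) := hmin j hjJ
          have h2 : sInf (H j) ≤ t := csInf_le (hHbb j) htHj
          have h3 : t = sInf (H j) := le_antisymm (le_trans ht.2 h1) h2
          exact (hkey j ⟨t, htHj⟩).2.1.1 (h3 ▸ htHj)
        · exact hout j hjs t ⟨ht.1, ht1⟩ hj
    -- piece 2 : the arc around the ball i₀
    have piece2 : JoinedIn (C \ ⋃ j, ball (z j) (R j)) (γ (sInf (H i₀))) (γ (sSup (H i₀))) :=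
      (harc (z i₀) (R i₀) (hR i₀) _ _ hamem hbmem).mono (hsph i₀)
    -- piece 3 : recursion on the remaining segment
    have hx' : γ (sSup (H i₀)) ∈ C \ ⋃ j, ball (z j) (R j) := hsph i₀ hbmem
    have hx'b : ∀ j, γ (sSup (H i₀)) ∉ ball (z j) (R j) := by
      intro j hball
      exact hx'.2 (mem_iUnion.mpr ⟨j, hball⟩)
    have hrepar : ∀ t : ℝ, AffineMap.lineMap (k := ℝ) (γ (sSup (H i₀))) y t =
        γ (sSup (H i₀) + t * (1 - sSup (H i₀))) := by
      intro t
      show AffineMap.lineMap (k := ℝ) (AffineMap.lineMap (k := ℝ) x y (sSup (H i₀))) y t =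
        AffineMap.lineMap (k := ℝ) x y (sSup (H i₀) + t * (1 - sSup (H i₀)))
      simp only [AffineMap.lineMap_apply_module, Complex.real_smul]
      push_cast
      ring
    have piece3 : JoinedIn (C \ ⋃ j, ball (z j) (R j)) (γ (sSup (H i₀))) y := by
      refine ih (s.erase i₀) (Finset.erase_ssubset hi₀s) _ y hx'.1 hy hx'b hyb ?_
      intro j hj t ht hball
      rw [hrepar] at hball
      set u := sSup (H i₀) + t * (1 - sSup (H i₀)) with hu
      have hub : sSup (H i₀) ≤ u := by nlinarith [ht.1, ht.2]
      have hu1 : u ≤ 1 := by nlinarith [ht.1, ht.2]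
      rcases eq_or_ne j i₀ with rfl | hne
      · -- the segment after sSup (H j) does not return to ball j
        rcases eq_or_lt_of_le hu1 with h | h
        · apply hyb j; rw [← hγ1, ← h]; exact hball
        · have huH : u ∈ H j := ⟨⟨lt_of_lt_of_le hb0 hub, h⟩, hball⟩
          have : u ≤ sSup (H j) := le_csSup (hHba j) huH
          have huu : u = sSup (H j) := le_antisymm this hub
          exact hbnot (huu ▸ huH)
      · have hjs : j ∉ s := fun hjs => hj (Finset.mem_erase.mpr ⟨hne, hjs⟩)
        exact hout j hjs u ⟨le_trans (le_trans ha0 hab) hub, hu1⟩ hball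
    exact (piece1.trans piece2).trans piece3



/-- the "container" set: strict or non-strict positivity set of a quadratic -/
def cset (str : Bool) (A : ℝ) (b : ℂ) (C : ℝ) : Set ℂ :=
  {w | if str then 0 < qf A b C w else 0 ≤ qf A b C w}

lemma cset_mem {str A b C w} : w ∈ cset str A b C ↔
    (if str then 0 < qf A b C w else 0 ≤ qf A b C w) := Iff.rfl

lemma cset_of_min {str : Bool} {A b C} {x y w : ℂ} (hx : x ∈ cset str A b C)
    (hy : y ∈ cset str A b C) (h : min (qf A b C x) (qf A b C y) ≤ qf A b C w) :
    w ∈ cset str A b C := by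
  cases str <;> simp only [cset_mem, if_true, if_false] at *
  · exact le_trans (le_min hx hy) h
  · exact lt_of_lt_of_le (lt_min hx hy) h

lemma cset_convex (str : Bool) {A : ℝ} (hA : A ≤ 0) (b : ℂ) (C : ℝ) :
    Convex ℝ (cset str A b C) := by
  intro x hx y hy p q hp hq hpq
  have hxy : p • x + q • y = x + q • (y - x) := by
    have : p = 1 - q := by linarith
    rw [this, sub_smul, one_smul, smul_sub]; abel
  rw [hxy]
  exact cset_of_min hx hy (qf_min_lerp hA b C x y ⟨hq, by linarith⟩)

lemma cset_arc (str : Bool) {A : ℝ} (hA : A ≤ 0) (b : ℂ) (C : ℝ) :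
    ∀ (z : ℂ) (R : ℝ), 0 < R → ∀ w₁ w₂, w₁ ∈ sphere z R ∩ cset str A b C →
      w₂ ∈ sphere z R ∩ cset str A b C →
      JoinedIn (sphere z R ∩ cset str A b C) w₁ w₂ := by
  intro z R hR w₁ w₂ ⟨h₁s, h₁c⟩ ⟨h₂s, h₂c⟩
  refine (arc_joined A b C z hR (mem_sphere.mp h₁s) (mem_sphere.mp h₂s)).mono ?_
  rintro w ⟨hws, hwm⟩
  exact ⟨mem_sphere.mpr hws, cset_of_min h₁c h₂c hwm⟩

lemma exists_eps {ι : Type*} [Fintype ι] (f : ι → ℝ) (hf : ∀ i, 0 < f i) :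
    ∃ ε : ℝ, 0 < ε ∧ ∀ i, ε ≤ f i := by
  rcases isEmpty_or_nonempty ι with h | h
  · exact ⟨1, one_pos, fun i => (h.false i).elim⟩
  · refine ⟨Finset.univ.inf' Finset.univ_nonempty f, ?_, fun i => Finset.inf'_le f (Finset.mem_univ i)⟩
    rw [Finset.lt_inf'_iff]
    exact fun i _ => hf i

lemma dist_gt_of_disjoint_closedBall {Z₁ Z₂ : ℂ} {P₁ P₂ : ℝ} (h₁ : 0 ≤ P₁) (h₂ : 0 ≤ P₂)
    (hd : Disjoint (closedBall Z₁ P₁) (closedBall Z₂ P₂)) : P₁ + P₂ < dist Z₁ Z₂ := by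
  by_contra hc
  push_neg at hc
  rcases le_or_gt (dist Z₁ Z₂) P₁ with h | h
  · exact (Set.disjoint_left.mp hd (mem_closedBall.mpr (by rw [dist_comm]; exact h))
      (mem_closedBall_self h₂)).elim
  · have hdpos : 0 < dist Z₁ Z₂ := lt_of_le_of_lt h₁ h
    set p : ℂ := Z₁ + (P₁ / dist Z₁ Z₂) • (Z₂ - Z₁) with hp
    have hn : ‖Z₂ - Z₁‖ = dist Z₁ Z₂ := by rw [← dist_eq_norm, dist_comm]
    have hd1 : dist p Z₁ = P₁ := by
      rw [dist_eq_norm, hp, add_sub_cancel_left, norm_smul, Real.norm_eq_abs,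
        abs_of_nonneg (div_nonneg h₁ hdpos.le), hn, div_mul_cancel₀ _ hdpos.ne']
    have hd2 : dist p Z₂ = dist Z₁ Z₂ - P₁ := by
      have hps : p - Z₂ = (P₁ / dist Z₁ Z₂ - 1) • (Z₂ - Z₁) := by
        rw [hp, sub_smul, one_smul]; abel
      rw [dist_eq_norm, hps, norm_smul, Real.norm_eq_abs,
        abs_of_nonpos (by rw [sub_nonpos]; exact (div_le_one hdpos).mpr h.le), hn,
        neg_sub, sub_mul, one_mul, div_mul_cancel₀ _ hdpos.ne']
    exact (Set.disjoint_left.mp hd (mem_closedBall.mpr hd1.le)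
      (mem_closedBall.mpr (by rw [hd2]; linarith))).elim

/-- the planar theorem: in the positivity set of a concave quadratic, two points
outside a finite family of pairwise disjoint closed balls can be joined avoiding them -/
theorem planar {ι : Type*} [Fintype ι] [DecidableEq ι] (str : Bool) {A : ℝ} (hA : A ≤ 0) (b : ℂ) (C : ℝ)
    (Z : ι → ℂ) (P : ι → ℝ) (hP : ∀ i, 0 ≤ P i)
    (hd : Pairwise (Function.onFun Disjoint fun i => closedBall (Z i) (P i)))
    {x y : ℂ} (hx : x ∈ cset str A b C) (hy : y ∈ cset str A b C)
    (hxb : ∀ i, x ∉ closedBall (Z i) (P i)) (hyb : ∀ i, y ∉ closedBall (Z i) (P i)) :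
    JoinedIn (cset str A b C \ ⋃ i, closedBall (Z i) (P i)) x y := by
  classical
  -- choose a uniform enlargement ε
  obtain ⟨ε, hε, hεle⟩ := exists_eps (ι := (ι × ι) ⊕ ι ⊕ ι)
    (f := Sum.elim
      (fun p : ι × ι => if p.1 = p.2 then (1:ℝ) else (dist (Z p.1) (Z p.2) - P p.1 - P p.2) / 3)
      (Sum.elim (fun i => (dist x (Z i) - P i) / 2) (fun i => (dist y (Z i) - P i) / 2)))
    (by
      rintro (⟨i, j⟩ | i | i)
      · simp only [Sum.elim_inl]
        by_cases h : i = j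
        · simp [h]
        · rw [if_neg h]
          have := dist_gt_of_disjoint_closedBall (hP i) (hP j) (hd h)
          linarith
      · simp only [Sum.elim_inr, Sum.elim_inl]
        have : P i < dist x (Z i) := by
          by_contra hc; push_neg at hc; exact hxb i (mem_closedBall.mpr hc)
        linarith
      · simp only [Sum.elim_inr]
        have : P i < dist y (Z i) := by
          by_contra hc; push_neg at hc; exact hyb i (mem_closedBall.mpr hc)
        linarith)
  have hpair : ∀ i j, i ≠ j → P i + ε + (P j + ε) < dist (Z i) (Z j) := by
    intro i j hij
    have h1 := hεle (Sum.inl (i, j))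
    rw [Sum.elim_inl, if_neg hij] at h1
    have h2 := dist_gt_of_disjoint_closedBall (hP i) (hP j) (hd hij)
    linarith
  have hdball : Pairwise (Function.onFun Disjoint fun i => ball (Z i) (P i + ε)) := by
    intro i j hij
    rw [Function.onFun, Set.disjoint_left]
    intro w hwi hwj
    rw [mem_ball] at hwi hwj
    have := dist_triangle (Z i) w (Z j)
    rw [dist_comm (Z i) w] at this
    have := hpair i j hij
    linarith
  have hxb' : ∀ i, x ∉ ball (Z i) (P i + ε) := by
    intro i hball
    have h1 := hεle (Sum.inr (Sum.inl i))
    rw [Sum.elim_inr, Sum.elim_inl] at h1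
    rw [mem_ball] at hball
    linarith
  have hyb' : ∀ i, y ∉ ball (Z i) (P i + ε) := by
    intro i hball
    have h1 := hεle (Sum.inr (Sum.inr i))
    rw [Sum.elim_inr, Sum.elim_inr] at h1
    rw [mem_ball] at hball
    linarith
  have := core (cset_convex str hA b C) (cset_arc str hA b C) Z (fun i => P i + ε)
    (fun i => by have := hP i; show (0:ℝ) < P i + ε; linarith) hdball Finset.univ x y hx hy hxb' hyb'
    (fun i hi => (hi (Finset.mem_univ i)).elim)
  refine this.mono ?_
  intro w hw
  refine ⟨hw.1, ?_⟩
  rw [mem_iUnion]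
  rintro ⟨i, hi⟩
  exact hw.2 (mem_iUnion.mpr ⟨i, closedBall_subset_ball (by have := hP i; show P i < P i + ε; linarith) hi⟩)




lemma quad_eq_closedBall {A : ℝ} (hA : A < 0) (b : ℂ) (C : ℝ)
    (hne : ∃ w₀, 0 ≤ qf A b C w₀) :
    ∃ Z P, 0 ≤ P ∧ ∀ w, (0 ≤ qf A b C w ↔ w ∈ closedBall Z P) := by
  set Z : ℂ := (-(2*A))⁻¹ • b with hZ
  have hAne : A ≠ 0 := hA.ne
  have hid : ∀ w, qf A b C w = A * Complex.normSq (w - Z) + (C - A * Complex.normSq Z) := by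
    intro w
    simp only [qf, hZ, Complex.normSq_apply, Complex.sub_re, Complex.sub_im, Complex.real_smul,
      Complex.mul_re, Complex.mul_im, Complex.ofReal_re, Complex.ofReal_im]
    field_simp
    ring
  set m : ℝ := (C - A * Complex.normSq Z) / (-A) with hm
  have hiff : ∀ w, 0 ≤ qf A b C w ↔ Complex.normSq (w - Z) ≤ m := by
    intro w
    rw [hid, hm]
    constructor <;> intro h
    · rw [le_div_iff₀ (by linarith : (0:ℝ) < -A)]
      nlinarith
    · rw [le_div_iff₀ (by linarith : (0:ℝ) < -A)] at h
      nlinarith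
  have hm0 : 0 ≤ m := by
    obtain ⟨w₀, hw₀⟩ := hne
    have := (hiff w₀).mp hw₀
    have := Complex.normSq_nonneg (w₀ - Z)
    linarith
  refine ⟨Z, Real.sqrt m, Real.sqrt_nonneg m, fun w => ?_⟩
  rw [hiff, mem_closedBall, Complex.dist_eq, Complex.norm_def]
  constructor <;> intro h
  · exact Real.sqrt_le_sqrt h
  · have h1 : Real.sqrt (Complex.normSq (w - Z)) ^ 2 ≤ Real.sqrt m ^ 2 := by
      apply pow_le_pow_left₀ (Real.sqrt_nonneg _) h
    rwa [Real.sq_sqrt (Complex.normSq_nonneg _), Real.sq_sqrt hm0] at h1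




abbrev E3 := EuclideanSpace ℝ (Fin 3)

local notation "S2" => Metric.sphere (0 : E3) 1

instance fact3 : Fact (Module.finrank ℝ E3 = 2 + 1) := ⟨by
  simp [finrank_euclideanSpace_fin]⟩

variable {v : E3}

lemma unit_ne_zero (hv : ‖v‖ = 1) : v ≠ 0 := by
  intro h; rw [h, norm_zero] at hv; exact one_ne_zero hv.symm

/-- identification of `ℂ` with the orthogonal complement of `v` -/
def isoC (hv : ‖v‖ = 1) : ℂ ≃ₗᵢ[ℝ] (ℝ ∙ v)ᗮ :=
  Complex.orthonormalBasisOneI.repr.trans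
    (OrthonormalBasis.fromOrthogonalSpanSingleton 2 (unit_ne_zero hv)).repr.symm

/-- inverse stereographic projection, defined on all of `ℂ` -/
def invS (hv : ‖v‖ = 1) (ω : ℂ) : S2 := stereoInvFun hv (isoC hv ω)

lemma invS_continuous (hv : ‖v‖ = 1) : Continuous (invS hv) :=
  (continuous_stereoInvFun hv).comp (isoC hv).continuous

lemma invS_ne (hv : ‖v‖ = 1) (ω : ℂ) : invS hv ω ≠ (⟨v, by simp [hv]⟩ : S2) :=
  stereoInvFun_ne_north_pole hv _

/-- forward stereographic projection into `ℂ` -/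
def stFun (hv : ‖v‖ = 1) (x : ↥S2) : ℂ := (isoC hv).symm (stereoToFun v x)

lemma invS_left_inv (hv : ‖v‖ = 1) {x : ↥S2} (hx : (x : E3) ≠ v) :
    invS hv (stFun hv x) = x := by
  rw [invS, stFun, LinearIsometryEquiv.apply_symm_apply]
  exact stereo_left_inv hv hx

/-- the dictionary between inner-product conditions on the sphere and quadratic
conditions in the plane -/
lemma dict (hv : ‖v‖ = 1) (c : E3) (t : ℝ) :
    ∃ b : ℂ, ∀ ω : ℂ,
      (Complex.normSq ω + 4) * ((inner ℝ ((invS hv ω : S2) : E3) c : ℝ) - t) =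
        qf ((inner ℝ v c : ℝ) - t) b (-4 * (inner ℝ v c : ℝ) - 4 * t) ω := by
  have hcp : c - (inner ℝ v c : ℝ) • v ∈ (ℝ ∙ v)ᗮ := by
    rw [Submodule.mem_orthogonal_singleton_iff_inner_right]
    rw [inner_sub_right, real_inner_smul_right, real_inner_self_eq_norm_sq, hv]
    ring
  set bc : ℂ := (isoC hv).symm ⟨c - (inner ℝ v c : ℝ) • v, hcp⟩ with hbc
  refine ⟨(4:ℝ) • bc, fun ω => ?_⟩
  set w : (ℝ ∙ v)ᗮ := isoC hv ω with hw
  have hnorm : ‖(w : E3)‖ ^ 2 = Complex.normSq ω := by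
    rw [Submodule.norm_coe]
    rw [hw, LinearIsometryEquiv.norm_map, Complex.sq_norm]
  have h1 : ((invS hv ω : S2) : E3) =
      (Complex.normSq ω + 4)⁻¹ • ((4:ℝ) • (w : E3) + (Complex.normSq ω - 4) • v) := by
    rw [invS, stereoInvFun_apply, ← hw]
    rw [show ‖w‖ ^ 2 = Complex.normSq ω by rw [← hnorm, Submodule.norm_coe]]
  -- the inner product of w with c
  have hwv : (inner ℝ (w : E3) v : ℝ) = 0 := by
    rw [real_inner_comm]
    exact Submodule.mem_orthogonal_singleton_iff_inner_right.mp w.2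
  have h3 : (inner ℝ (w : E3) c : ℝ) = ω.re * bc.re + ω.im * bc.im := by
    have hdec : c = (c - (inner ℝ v c : ℝ) • v) + (inner ℝ v c : ℝ) • v := by abel
    rw [hdec, inner_add_right, real_inner_smul_right, hwv, mul_zero, add_zero]
    have : (inner ℝ (w : E3) ((⟨c - (inner ℝ v c : ℝ) • v, hcp⟩ : (ℝ ∙ v)ᗮ) : E3) : ℝ) =
        (inner ℝ w (⟨c - (inner ℝ v c : ℝ) • v, hcp⟩ : (ℝ ∙ v)ᗮ) : ℝ) := rfl
    rw [show ((c - (inner ℝ v c : ℝ) • v) : E3) =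
        ((⟨c - (inner ℝ v c : ℝ) • v, hcp⟩ : (ℝ ∙ v)ᗮ) : E3) from rfl, this]
    rw [hw, show (⟨c - (inner ℝ v c : ℝ) • v, hcp⟩ : (ℝ ∙ v)ᗮ) = isoC hv bc by
      rw [hbc, LinearIsometryEquiv.apply_symm_apply]]
    rw [LinearIsometryEquiv.inner_map_map]
    rw [Complex.inner]
    rw [Complex.mul_re, Complex.conj_re, Complex.conj_im]
    ring
  have hpos : (0:ℝ) < Complex.normSq ω + 4 := by
    have := Complex.normSq_nonneg ω
    linarith
  rw [h1, real_inner_smul_left, inner_add_left, real_inner_smul_left, real_inner_smul_left, h3]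
  rw [qf]
  have hbre : ((4:ℝ) • bc).re = 4 * bc.re := by simp [Complex.real_smul]
  have hbim : ((4:ℝ) • bc).im = 4 * bc.im := by simp [Complex.real_smul]
  rw [hbre, hbim]
  field_simp
  ring





/-- sign-transferred version of the dictionary -/
lemma dict' {v : E3} (hv : ‖v‖ = 1) (c : E3) (t : ℝ) :
    ∃ b C, ∀ ω : ℂ,
      ((t ≤ ⟪((invS hv ω : ↥S2) : E3), c⟫) ↔ 0 ≤ qf (⟪v, c⟫ - t) b C ω) ∧
      ((t < ⟪((invS hv ω : ↥S2) : E3), c⟫) ↔ 0 < qf (⟪v, c⟫ - t) b C ω) := by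
  obtain ⟨b, hb⟩ := dict hv c t
  refine ⟨b, -4 * ⟪v, c⟫ - 4 * t, fun ω => ?_⟩
  have hpos : (0:ℝ) < Complex.normSq ω + 4 := by
    have := Complex.normSq_nonneg ω; linarith
  constructor
  · constructor
    · intro h
      rw [← hb ω]
      exact mul_nonneg hpos.le (by linarith)
    · intro h
      rw [← hb ω] at h
      nlinarith
  · constructor
    · intro h
      rw [← hb ω]
      exact mul_pos hpos (by linarith)
    · intro h
      rw [← hb ω] at h
      nlinarith

lemma joined_transfer {α : Type*} [TopologicalSpace α] {f : ℂ → α} (hf : Continuous f)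
    {s : Set ℂ} {T : Set α} (hmap : ∀ w ∈ s, f w ∈ T) {w₁ w₂ : ℂ}
    (h : JoinedIn s w₁ w₂) {x y : α} (h1 : f w₁ = x) (h2 : f w₂ = y) : JoinedIn T x y := by
  subst h1; subst h2
  obtain ⟨p, hp⟩ := h
  refine ⟨p.map hf, fun u => ?_⟩
  simpa using hmap _ (hp u)

lemma preconn_two {X : Type*} [TopologicalSpace X] {s A B : Set X} (hs : IsPreconnected s)
    (hA : IsClosed A) (hB : IsClosed B) (hAB : Disjoint A B) (hcov : s ⊆ A ∪ B) :
    s ⊆ A ∨ s ⊆ B := by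
  by_contra hc
  push_neg at hc
  obtain ⟨hc1, hc2⟩ := hc
  obtain ⟨p, hps, hpA⟩ := not_subset.mp hc1
  obtain ⟨q, hqs, hqB⟩ := not_subset.mp hc2
  have h1 : s ⊆ Bᶜ ∪ Aᶜ := by
    intro x hx
    rcases hcov hx with h | h
    · exact Or.inl (fun hxB => Set.disjoint_left.mp hAB h hxB)
    · exact Or.inr (fun hxA => Set.disjoint_left.mp hAB hxA h)
  have hpB : p ∈ B := (hcov hps).resolve_left hpA
  have hqA : q ∈ A := (hcov hqs).resolve_right hqB
  obtain ⟨x, hxs, hxB, hxA⟩ := hs Bᶜ Aᶜ hB.isOpen_compl hA.isOpen_compl h1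
    ⟨q, hqs, fun hqB' => Set.disjoint_left.mp hAB hqA hqB'⟩ ⟨p, hps, hpA⟩
  rcases hcov hxs with h | h
  · exact hxA h
  · exact hxB h

lemma subset_of_closed_cover {X : Type*} [TopologicalSpace X] {ι : Type*} [DecidableEq ι]
    {s : Set X} (hs : IsPreconnected s) (hne : s.Nonempty) (K : ι → Set X)
    (hK : ∀ i, IsClosed (K i)) (hd : Pairwise (Function.onFun Disjoint K)) :
    ∀ u : Finset ι, s ⊆ (⋃ i ∈ u, K i) → ∃ i ∈ u, s ⊆ K i := by
  intro u
  induction u using Finset.induction_on with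
  | empty =>
    intro h
    obtain ⟨p, hp⟩ := hne
    simpa using h hp
  | @insert a u ha ih =>
    intro hcov
    have hBcl : IsClosed (⋃ i ∈ u, K i) := by
      apply Set.Finite.isClosed_biUnion u.finite_toSet
      intro i _
      exact hK i
    have hdis : Disjoint (K a) (⋃ i ∈ u, K i) := by
      rw [Set.disjoint_iff_inter_eq_empty, Set.inter_iUnion₂]
      apply Set.eq_empty_of_forall_notMem
      intro x hx
      rw [Set.mem_iUnion₂] at hx
      obtain ⟨i, hi, hxi⟩ := hx
      have hne' : a ≠ i := fun h => ha (h ▸ hi)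
      exact Set.disjoint_left.mp (hd hne') hxi.1 hxi.2
    have hcov' : s ⊆ K a ∪ ⋃ i ∈ u, K i := by
      intro x hx
      have := hcov hx
      rw [Set.mem_iUnion₂] at this
      obtain ⟨i, hi, hxi⟩ := this
      rcases Finset.mem_insert.mp hi with rfl | hi'
      · exact Or.inl hxi
      · exact Or.inr (Set.mem_biUnion hi' hxi)
    rcases preconn_two hs (hK a) hBcl hdis hcov' with h | h
    · exact ⟨a, Finset.mem_insert_self a u, h⟩
    · obtain ⟨i, hi, hsub⟩ := ih h
      exact ⟨i, Finset.mem_insert_of_mem hi, hsub⟩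

instance : PathConnectedSpace ↥S2 := by
  rw [← isPathConnected_iff_pathConnectedSpace]
  apply isPathConnected_sphere _ _ zero_le_one
  have h3 : Module.rank ℝ E3 = 3 := by
    rw [← Module.finrank_eq_rank, finrank_euclideanSpace_fin]
    norm_num
  rw [h3]
  norm_num

lemma eq_of_inner_ge_one {x c : E3} (hx : ‖x‖ = 1) (hc : ‖c‖ = 1) (h : 1 ≤ ⟪x, c⟫) : x = c := by
  have h1 : ‖x - c‖ ^ 2 = 2 - 2 * ⟪x, c⟫ := by
    rw [norm_sub_sq_real, hx, hc]; ring
  have h3 : ‖x - c‖ ^ 2 = 0 := le_antisymm (by rw [h1]; linarith) (by positivity)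
  have := pow_eq_zero_iff (n := 2) (by norm_num) |>.mp h3
  rwa [norm_eq_zero, sub_eq_zero] at this

lemma qf_neg (A : ℝ) (b : ℂ) (C : ℝ) (w : ℂ) : qf (-A) (-b) (-C) w = -qf A b C w := by
  simp only [qf, Complex.neg_re, Complex.neg_im]; ring

def capSet (str : Bool) (a : E3) (σ : ℝ) : Set ↥S2 :=
  {x | if str then σ < ⟪(x : E3), a⟫ else σ ≤ ⟪(x : E3), a⟫}

def Kset (c : E3) (t : ℝ) : Set ↥S2 := {x | t ≤ ⟪(x : E3), c⟫}

lemma Kset_closed (c : E3) (t : ℝ) : IsClosed (Kset c t) := by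
  have hcont : Continuous (fun x : ↥S2 => ⟪(x : E3), c⟫) :=
    Continuous.inner continuous_subtype_val continuous_const
  exact isClosed_le continuous_const hcont

lemma sphere_norm_one (x : ↥S2) : ‖(x : E3)‖ = 1 := by
  have := x.2
  rwa [mem_sphere_zero_iff_norm] at this

lemma self_mem_Kset {c : ↥S2} {t : ℝ} (ht : t ≤ 1) : c ∈ Kset (c : E3) t := by
  show t ≤ ⟪(c : E3), (c : E3)⟫
  rw [real_inner_self_eq_norm_sq, sphere_norm_one c]
  simpa using ht

lemma cap_compl (str : Bool) (a : E3) (σ : ℝ) :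
    (capSet str a σ)ᶜ = capSet (!str) (-a) (-σ) := by
  ext x
  cases str
  · constructor
    · intro h
      have h' : ¬ (σ ≤ ⟪(x : E3), a⟫) := h
      rw [not_le] at h'
      show -σ < ⟪(x : E3), -a⟫
      rw [inner_neg_right]; linarith
    · intro h
      have h' : -σ < ⟪(x : E3), -a⟫ := h
      rw [inner_neg_right] at h'
      show ¬ (σ ≤ ⟪(x : E3), a⟫)
      rw [not_le]; linarith
  · constructor
    · intro h
      have h' : ¬ (σ < ⟪(x : E3), a⟫) := h
      rw [not_lt] at h'
      show -σ ≤ ⟪(x : E3), -a⟫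
      rw [inner_neg_right]; linarith
    · intro h
      have h' : -σ ≤ ⟪(x : E3), -a⟫ := h
      rw [inner_neg_right] at h'
      show ¬ (σ < ⟪(x : E3), a⟫)
      rw [not_lt]; linarith

/-- every nonempty (open or closed) cap on the sphere is path connected -/
lemma cap_pathConnected (str : Bool) (a : E3) (σ : ℝ)
    (hne : (capSet str a σ).Nonempty) : IsPathConnected (capSet str a σ) := by
  classical
  by_cases hex : ∃ vS : ↥S2, vS ∉ capSet str a σ
  · obtain ⟨vS, hvcap⟩ := hex
    set v : E3 := (vS : E3) with hvdef
    have hv : ‖v‖ = 1 := sphere_norm_one vS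
    have hA0 : ⟪v, a⟫ - σ ≤ 0 := by
      cases str
      · have h' : ¬ (σ ≤ ⟪(vS : E3), a⟫) := hvcap
        rw [not_le] at h'; rw [hvdef]; linarith
      · have h' : ¬ (σ < ⟪(vS : E3), a⟫) := hvcap
        rw [not_lt] at h'; rw [hvdef]; linarith
    obtain ⟨b, C, hbC⟩ := dict' hv a σ
    set cs : Set ℂ := {w | if str then 0 < qf (⟪v, a⟫ - σ) b C w
      else 0 ≤ qf (⟪v, a⟫ - σ) b C w} with hcs
    have hcorr : ∀ ω, invS hv ω ∈ capSet str a σ ↔ ω ∈ cs := by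
      intro ω
      cases str <;> simp only [capSet, hcs, mem_setOf_eq, if_true, if_false,
        Bool.false_eq_true, Bool.true_eq_false]
      · exact (hbC ω).1
      · exact (hbC ω).2
    have hxne : ∀ x : ↥S2, x ∈ capSet str a σ → (x : E3) ≠ v := by
      intro x hx h
      exact hvcap (by rwa [show vS = x from Subtype.ext h.symm])
    obtain ⟨x₀, hx₀⟩ := hne
    refine ⟨x₀, hx₀, @fun y hy => ?_⟩
    set ωx := stFun hv x₀ with hωx
    set ωy := stFun hv y with hωy
    have hix : invS hv ωx = x₀ := invS_left_inv hv (hxne x₀ hx₀)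
    have hiy : invS hv ωy = y := invS_left_inv hv (hxne y hy)
    have hplanar := planar (ι := Empty) str hA0 b C (fun i => i.elim) (fun i => i.elim)
      (fun i => i.elim) (fun i j h => i.elim)
      (x := ωx) (y := ωy) ((hcorr ωx).mp (hix ▸ hx₀)) ((hcorr ωy).mp (hiy ▸ hy))
      (fun i => i.elim) (fun i => i.elim)
    refine joined_transfer (invS_continuous hv) ?_ hplanar hix hiy
    intro w hw
    exact (hcorr w).mpr hw.1
  · push_neg at hex
    have huniv : capSet str a σ = univ := eq_univ_of_forall hex
    rw [huniv]
    exact pathConnectedSpace_iff_univ.mp inferInstance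

/-- transfer machinery: projecting from a point `vS` outside all the obstacle caps,
solve the joining problem on the sphere via the planar theorem -/
lemma transfer_main {ι : Type*} [Fintype ι] [DecidableEq ι] {vS : ↥S2}
    (hv : ‖(vS : E3)‖ = 1) (str : Bool) {A : ℝ} (hA : A ≤ 0) (b : ℂ) (C : ℝ)
    (c : ι → ↥S2) (t : ι → ℝ) (ht : ∀ i, t i ≤ 1)
    (hvK : ∀ i, vS ∉ Kset ((c i : E3)) (t i))
    (hd : Pairwise (Function.onFun Disjoint fun i => Kset ((c i : E3)) (t i)))
    (W : Set ↥S2)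
    (hcorr : ∀ ω : ℂ, (if str then 0 < qf A b C ω else 0 ≤ qf A b C ω) →
      (∀ i, invS hv ω ∉ Kset ((c i : E3)) (t i)) → invS hv ω ∈ W)
    {x y : ↥S2} (hxv : (x : E3) ≠ (vS : E3)) (hyv : (y : E3) ≠ (vS : E3))
    (hxcs : if str then 0 < qf A b C (stFun hv x) else 0 ≤ qf A b C (stFun hv x))
    (hycs : if str then 0 < qf A b C (stFun hv y) else 0 ≤ qf A b C (stFun hv y))
    (hxK : ∀ i, x ∉ Kset ((c i : E3)) (t i)) (hyK : ∀ i, y ∉ Kset ((c i : E3)) (t i)) :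
    JoinedIn W x y := by
  classical
  have hix : invS hv (stFun hv x) = x := invS_left_inv hv hxv
  have hiy : invS hv (stFun hv y) = y := invS_left_inv hv hyv
  -- dictionary for the obstacles
  choose bK CK hbK using fun i => dict' hv ((c i : E3)) (t i)
  have hAi : ∀ i, ⟪(vS : E3), ((c i : E3))⟫ - t i < 0 := by
    intro i
    have h' : ¬ (t i ≤ ⟪(vS : E3), ((c i : E3))⟫) := hvK i
    rw [not_le] at h'
    linarith
  have hcne : ∀ i, ((c i : E3)) ≠ (vS : E3) := by
    intro i h
    exact hvK i (by rw [show vS = c i from Subtype.ext h.symm]; exact self_mem_Kset (ht i))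
  have hwitness : ∀ i, 0 ≤ qf (⟪(vS : E3), ((c i : E3))⟫ - t i) (bK i) (CK i)
      (stFun hv (c i)) := by
    intro i
    have hic : invS hv (stFun hv (c i)) = c i := invS_left_inv hv (hcne i)
    refine ((hbK i (stFun hv (c i))).1).mp ?_
    rw [hic]
    exact self_mem_Kset (ht i)
  choose Z P hP hZP using fun i => quad_eq_closedBall (hAi i) (bK i) (CK i)
    ⟨stFun hv (c i), hwitness i⟩
  -- membership in closed balls corresponds to membership in the caps
  have hMem : ∀ i ω, ω ∈ closedBall (Z i) (P i) ↔ invS hv ω ∈ Kset ((c i : E3)) (t i) := by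
    intro i ω
    rw [← hZP i ω]
    exact ((hbK i ω).1).symm
  have hdisj : Pairwise (Function.onFun Disjoint fun i => closedBall (Z i) (P i)) := by
    intro i j hij
    rw [Function.onFun, Set.disjoint_left]
    intro ω hωi hωj
    exact Set.disjoint_left.mp (hd hij) ((hMem i ω).mp hωi) ((hMem j ω).mp hωj)
  have hxb : ∀ i, stFun hv x ∉ closedBall (Z i) (P i) := by
    intro i hmem
    exact hxK i (by rw [← hix]; exact (hMem i _).mp hmem)
  have hyb : ∀ i, stFun hv y ∉ closedBall (Z i) (P i) := by
    intro i hmem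
    exact hyK i (by rw [← hiy]; exact (hMem i _).mp hmem)
  have hplanar := planar (ι := ι) str hA b C Z P hP hdisj
    (x := stFun hv x) (y := stFun hv y) hxcs hycs hxb hyb
  refine joined_transfer (invS_continuous hv) ?_ hplanar hix hiy
  intro w hw
  refine hcorr w hw.1 ?_
  intro i hKi
  exact hw.2 (mem_iUnion.mpr ⟨i, (hMem i w).mpr hKi⟩)

lemma qf_one (w : ℂ) : qf 0 0 1 w = 1 := by simp [qf]

/-- the main joining lemma: circle domains intersected with caps are "joined" -/
theorem main_joined (str : Bool) (a : E3) (σ : ℝ) {n : ℕ} (c : Fin n → ↥S2) (t : Fin n → ℝ)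
    (ht : ∀ i, t i ≤ 1) (hd : Pairwise (Function.onFun Disjoint fun i => Kset ((c i : E3)) (t i)))
    {x y : ↥S2} (hx : x ∈ capSet str a σ ∩ ⋂ i, (Kset ((c i : E3)) (t i))ᶜ)
    (hy : y ∈ capSet str a σ ∩ ⋂ i, (Kset ((c i : E3)) (t i))ᶜ) :
    JoinedIn (capSet str a σ ∩ ⋂ i, (Kset ((c i : E3)) (t i))ᶜ) x y := by
  classical
  have hxK : ∀ i, x ∉ Kset ((c i : E3)) (t i) := by
    intro i
    have := hx.2
    rw [mem_iInter] at this
    exact this i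
  have hyK : ∀ i, y ∉ Kset ((c i : E3)) (t i) := by
    intro i
    have := hy.2
    rw [mem_iInter] at this
    exact this i
  by_cases hex : ∃ vS : ↥S2, vS ∉ capSet str a σ ∧ ∀ i, vS ∉ Kset ((c i : E3)) (t i)
  · -- Case A : projection point outside everything
    obtain ⟨vS, hvcap, hvK⟩ := hex
    have hv : ‖(vS : E3)‖ = 1 := sphere_norm_one vS
    have hA0 : ⟪(vS : E3), a⟫ - σ ≤ 0 := by
      cases str
      · have h' : ¬ (σ ≤ ⟪(vS : E3), a⟫) := hvcap
        rw [not_le] at h'; linarith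
      · have h' : ¬ (σ < ⟪(vS : E3), a⟫) := hvcap
        rw [not_lt] at h'; linarith
    obtain ⟨b, C, hbC⟩ := dict' hv a σ
    have hxv : (x : E3) ≠ (vS : E3) := fun h =>
      hvcap (by rw [show vS = x from Subtype.ext h.symm]; exact hx.1)
    have hyv : (y : E3) ≠ (vS : E3) := fun h =>
      hvcap (by rw [show vS = y from Subtype.ext h.symm]; exact hy.1)
    have hcap_iff : ∀ ω, invS hv ω ∈ capSet str a σ ↔
        (if str then 0 < qf (⟪(vS : E3), a⟫ - σ) b C ω
          else 0 ≤ qf (⟪(vS : E3), a⟫ - σ) b C ω) := by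
      intro ω
      cases str
      · exact (hbC ω).1
      · exact (hbC ω).2
    refine transfer_main hv str hA0 b C c t ht hvK hd _ ?_ hxv hyv ?_ ?_ hxK hyK
    · intro ω hcs hKs
      refine ⟨(hcap_iff ω).mpr hcs, ?_⟩
      rw [mem_iInter]
      exact hKs
    · exact (hcap_iff (stFun hv x)).mp (by rw [invS_left_inv hv hxv]; exact hx.1)
    · exact (hcap_iff (stFun hv y)).mp (by rw [invS_left_inv hv hyv]; exact hy.1)
  · -- Case B : the sphere is covered by the cap and the obstacles
    push_neg at hex
    rcases Nat.eq_zero_or_pos n with hn | hn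
    · -- no obstacles at all : everything is the whole sphere
      subst hn
      have hWuniv : capSet str a σ ∩ ⋂ i : Fin 0, (Kset ((c i : E3)) (t i))ᶜ = univ := by
        apply eq_univ_of_forall
        intro z
        refine ⟨?_, by simp⟩
        by_contra h
        obtain ⟨i, _⟩ := hex z h
        exact i.elim0
      rw [hWuniv]
      rw [joinedIn_univ]
      exact PathConnectedSpace.joined x y
    · -- find the obstacle containing the complement of the cap
      have hKcl : ∀ i, IsClosed (Kset ((c i : E3)) (t i)) := fun i => Kset_closed _ _
      obtain ⟨i₀, hsub⟩ : ∃ i₀, (capSet str a σ)ᶜ ⊆ Kset ((c i₀ : E3)) (t i₀) := by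
        by_cases hcompl : (capSet str a σ)ᶜ = ∅
        · exact ⟨⟨0, hn⟩, by rw [hcompl]; exact empty_subset _⟩
        · have hBne : ((capSet str a σ)ᶜ).Nonempty := nonempty_iff_ne_empty.mpr hcompl
          have hpc : IsPathConnected ((capSet str a σ)ᶜ) := by
            rw [cap_compl]
            exact cap_pathConnected _ _ _ (by rw [← cap_compl]; exact hBne)
          have hcov : (capSet str a σ)ᶜ ⊆ ⋃ i ∈ Finset.univ, Kset ((c i : E3)) (t i) := by
            intro z hz
            obtain ⟨i, hi⟩ := hex z hz
            exact Set.mem_biUnion (Finset.mem_univ i) hi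
          obtain ⟨i₀, _, hsub⟩ := subset_of_closed_cover
            hpc.isConnected.isPreconnected hBne _ hKcl hd Finset.univ hcov
          exact ⟨i₀, hsub⟩
      -- the cap constraint is vacuous
      have hW : capSet str a σ ∩ ⋂ i, (Kset ((c i : E3)) (t i))ᶜ =
          ⋂ i, (Kset ((c i : E3)) (t i))ᶜ := by
        apply Set.eq_of_subset_of_subset inter_subset_right
        intro z hz
        refine ⟨?_, hz⟩
        rw [mem_iInter] at hz
        by_contra hzc
        exact hz i₀ (hsub hzc)
      rw [hW] at hx hy ⊢
      set vS := c i₀ with hvS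
      have hv : ‖(vS : E3)‖ = 1 := sphere_norm_one vS
      have hself : ⟪(vS : E3), ((c i₀ : E3))⟫ = 1 := by
        rw [hvS, real_inner_self_eq_norm_sq, sphere_norm_one]
        norm_num
      -- obstacles : all the other caps
      set ι' := {j : Fin n // j ≠ i₀} with hι'
      have hvK' : ∀ j : ι', vS ∉ Kset ((c j.1 : E3)) (t j.1) := by
        intro j hmem
        exact Set.disjoint_left.mp (hd j.2.symm) (self_mem_Kset (ht i₀)) hmem
      have hd' : Pairwise (Function.onFun Disjoint fun j : ι' => Kset ((c j.1 : E3)) (t j.1)) := by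
        intro j₁ j₂ hne
        exact hd (fun h => hne (Subtype.ext h))
      have hxv : (x : E3) ≠ (vS : E3) := fun h =>
        hxK i₀ (by rw [show x = vS from Subtype.ext h]; exact self_mem_Kset (ht i₀))
      have hyv : (y : E3) ≠ (vS : E3) := fun h =>
        hyK i₀ (by rw [show y = vS from Subtype.ext h]; exact self_mem_Kset (ht i₀))
      have hxK' : ∀ j : ι', x ∉ Kset ((c j.1 : E3)) (t j.1) := fun j => hxK j.1
      have hyK' : ∀ j : ι', y ∉ Kset ((c j.1 : E3)) (t j.1) := fun j => hyK j.1
      have hWmem : ∀ z : ↥S2, z ∉ Kset ((c i₀ : E3)) (t i₀) →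
          (∀ j : ι', z ∉ Kset ((c j.1 : E3)) (t j.1)) →
          z ∈ ⋂ i, (Kset ((c i : E3)) (t i))ᶜ := by
        intro z h0 hrest
        rw [mem_iInter]
        intro j
        rcases eq_or_ne j i₀ with rfl | hne
        · exact h0
        · exact hrest ⟨j, hne⟩
      rcases lt_or_eq_of_le (ht i₀) with ht0 | ht1
      · -- the obstacle cap i₀ has interior : container is the disc Δ
        obtain ⟨b₀, C₀, hb₀⟩ := dict' hv ((c i₀ : E3)) (t i₀)
        have hA : -(⟪(vS : E3), ((c i₀ : E3))⟫ - t i₀) ≤ 0 := by rw [hself]; linarith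
        have hcs_iff : ∀ ω, (0 < qf (-(⟪(vS : E3), ((c i₀ : E3))⟫ - t i₀)) (-b₀) (-C₀) ω) ↔
            invS hv ω ∉ Kset ((c i₀ : E3)) (t i₀) := by
          intro ω
          rw [qf_neg, lt_neg, neg_zero]
          constructor
          · intro h hmem
            have : 0 ≤ qf (⟪(vS : E3), ((c i₀ : E3))⟫ - t i₀) b₀ C₀ ω := ((hb₀ ω).1).mp hmem
            linarith
          · intro h
            rcases lt_or_ge (qf (⟪(vS : E3), ((c i₀ : E3))⟫ - t i₀) b₀ C₀ ω) 0 with h' | h'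
            · exact h'
            · exact absurd (((hb₀ ω).1).mpr h') h
        refine transfer_main hv true hA (-b₀) (-C₀) (fun j : ι' => c j.1) (fun j => t j.1)
          (fun j => ht j.1) hvK' hd' _ ?_ hxv hyv ?_ ?_ hxK' hyK'
        · intro ω hcs hKs
          exact hWmem _ ((hcs_iff ω).mp hcs) hKs
        · show 0 < qf _ _ _ _
          refine (hcs_iff (stFun hv x)).mpr ?_
          rw [invS_left_inv hv hxv]
          exact hxK i₀
        · show 0 < qf _ _ _ _
          refine (hcs_iff (stFun hv y)).mpr ?_
          rw [invS_left_inv hv hyv]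
          exact hyK i₀
      · -- the obstacle cap i₀ is the single point vS
        have hKpt : Kset ((c i₀ : E3)) (t i₀) ⊆ {vS} := by
          intro z hz
          have h1 : (1:ℝ) ≤ ⟪(z : E3), ((c i₀ : E3))⟫ := by
            have hz' : t i₀ ≤ ⟪(z : E3), ((c i₀ : E3))⟫ := hz
            linarith
          have := eq_of_inner_ge_one (sphere_norm_one z) (sphere_norm_one (c i₀)) h1
          rw [mem_singleton_iff, hvS]
          exact Subtype.ext this
        refine transfer_main hv true (le_refl (0:ℝ)) 0 1 (fun j : ι' => c j.1) (fun j => t j.1)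
          (fun j => ht j.1) hvK' hd' _ ?_ hxv hyv ?_ ?_ hxK' hyK'
        · intro ω _ hKs
          refine hWmem _ ?_ hKs
          intro hmem
          have := hKpt hmem
          rw [mem_singleton_iff] at this
          exact invS_ne hv ω (this.trans (Subtype.ext rfl))
        · show 0 < qf 0 0 1 (stFun hv x)
          rw [qf_one]; norm_num
        · show 0 < qf 0 0 1 (stFun hv y)
          rw [qf_one]; norm_num

/-- the main path-connectivity result for circle domains intersected with caps -/
theorem main_ipc (str : Bool) (a : E3) (σ : ℝ) {n : ℕ} (c : Fin n → ↥S2) (t : Fin n → ℝ)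
    (ht : ∀ i, t i ≤ 1) (hd : Pairwise (Function.onFun Disjoint fun i => Kset ((c i : E3)) (t i)))
    (hne : (capSet str a σ ∩ ⋂ i, (Kset ((c i : E3)) (t i))ᶜ).Nonempty) :
    IsPathConnected (capSet str a σ ∩ ⋂ i, (Kset ((c i : E3)) (t i))ᶜ) := by
  obtain ⟨x₀, hx₀⟩ := hne
  exact ⟨x₀, hx₀, @fun y hy => main_joined str a σ c t ht hd hx₀ hy⟩


lemma capSet_false_eq_Kset (a : E3) (σ : ℝ) : capSet false a σ = Kset a σ := rfl

lemma cb_eq (cc : ↥S2) {ρ : ℝ} (hρ : 0 ≤ ρ) :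
    (closedBall cc ρ : Set ↥S2) = Kset ((cc : E3)) (1 - ρ ^ 2 / 2) := by
  ext x
  rw [mem_closedBall, Subtype.dist_eq, dist_eq_norm]
  have hsq : ‖(x : E3) - (cc : E3)‖ ^ 2 = 2 - 2 * ⟪(x : E3), (cc : E3)⟫ := by
    rw [norm_sub_sq_real, sphere_norm_one, sphere_norm_one]; ring
  constructor
  · intro h
    have h2 : ‖(x : E3) - (cc : E3)‖ ^ 2 ≤ ρ ^ 2 := pow_le_pow_left₀ (norm_nonneg _) h 2
    show 1 - ρ ^ 2 / 2 ≤ ⟪(x : E3), (cc : E3)⟫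
    rw [hsq] at h2; linarith
  · intro h
    have h' : 1 - ρ ^ 2 / 2 ≤ ⟪(x : E3), (cc : E3)⟫ := h
    have h2 : ‖(x : E3) - (cc : E3)‖ ^ 2 ≤ ρ ^ 2 := by rw [hsq]; linarith
    calc ‖(x : E3) - (cc : E3)‖ = Real.sqrt (‖(x : E3) - (cc : E3)‖ ^ 2) :=
          (Real.sqrt_sq (norm_nonneg _)).symm
      _ ≤ Real.sqrt (ρ ^ 2) := Real.sqrt_le_sqrt h2
      _ = ρ := Real.sqrt_sq hρ

lemma ball_eq (a : ↥S2) {r : ℝ} (hr : 0 < r) :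
    (ball a r : Set ↥S2) = capSet true ((a : E3)) (1 - r ^ 2 / 2) := by
  ext x
  rw [mem_ball, Subtype.dist_eq, dist_eq_norm]
  have hsq : ‖(x : E3) - (a : E3)‖ ^ 2 = 2 - 2 * ⟪(x : E3), (a : E3)⟫ := by
    rw [norm_sub_sq_real, sphere_norm_one, sphere_norm_one]; ring
  constructor
  · intro h
    have h2 : ‖(x : E3) - (a : E3)‖ ^ 2 < r ^ 2 := by
      apply pow_lt_pow_left₀ h (norm_nonneg _)
      norm_num
    show 1 - r ^ 2 / 2 < ⟪(x : E3), (a : E3)⟫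
    rw [hsq] at h2; linarith
  · intro h
    have h' : 1 - r ^ 2 / 2 < ⟪(x : E3), (a : E3)⟫ := h
    have h2 : ‖(x : E3) - (a : E3)‖ ^ 2 < r ^ 2 := by rw [hsq]; linarith
    calc ‖(x : E3) - (a : E3)‖ = Real.sqrt (‖(x : E3) - (a : E3)‖ ^ 2) :=
          (Real.sqrt_sq (norm_nonneg _)).symm
      _ < Real.sqrt (r ^ 2) := Real.sqrt_lt_sqrt (sq_nonneg _) h2
      _ = r := Real.sqrt_sq hr.le

lemma ball_compl_eq (a : ↥S2) {r : ℝ} (hr : 0 < r) (x : ↥S2) :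
    x ∉ ball a r ↔ x ∈ capSet false (-(a : E3)) (r ^ 2 / 2 - 1) := by
  rw [mem_ball, Subtype.dist_eq, dist_eq_norm, not_lt]
  have hsq : ‖(x : E3) - (a : E3)‖ ^ 2 = 2 - 2 * ⟪(x : E3), (a : E3)⟫ := by
    rw [norm_sub_sq_real, sphere_norm_one, sphere_norm_one]; ring
  constructor
  · intro h
    have h2 : r ^ 2 ≤ ‖(x : E3) - (a : E3)‖ ^ 2 := pow_le_pow_left₀ hr.le h 2
    show r ^ 2 / 2 - 1 ≤ ⟪(x : E3), -(a : E3)⟫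
    rw [inner_neg_right, hsq] at *
    linarith
  · intro h
    have h' : r ^ 2 / 2 - 1 ≤ ⟪(x : E3), -(a : E3)⟫ := h
    rw [inner_neg_right] at h'
    have h2 : r ^ 2 ≤ ‖(x : E3) - (a : E3)‖ ^ 2 := by rw [hsq]; linarith
    calc r = Real.sqrt (r ^ 2) := (Real.sqrt_sq hr.le).symm
      _ ≤ Real.sqrt (‖(x : E3) - (a : E3)‖ ^ 2) := Real.sqrt_le_sqrt h2
      _ = ‖(x : E3) - (a : E3)‖ := Real.sqrt_sq (norm_nonneg _)

lemma continuum_of_joined {X : Type*} [TopologicalSpace X] {S : Set X} {x y : X}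
    (h : JoinedIn S x y) :
    ∃ E : Set X, IsCompact E ∧ IsConnected E ∧ x ∈ E ∧ y ∈ E ∧ E ⊆ S := by
  obtain ⟨p, hp⟩ := h
  exact ⟨range p, isCompact_range p.continuous, isConnected_range p.continuous,
    ⟨0, p.source⟩, ⟨1, p.target⟩, range_subset_iff.mpr hp⟩

end CircleLLC

open CircleLLC

local notation "S2" => Metric.sphere (0 : CircleLLC.E3) 1

/-- Every finitely connected circle domain `V` in the chordal Riemann sphere (the unit
sphere in `ℝ³`), i.e. the complement of finitely many pairwise disjoint closed (possibly
degenerate) round disks, is `1`-LLC. -/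
theorem circleDomain_one_LLC {n : ℕ}
    (c : Fin n → ↥(sphere (0 : EuclideanSpace ℝ (Fin 3)) 1))
    (ρ : Fin n → ℝ) (hρ : ∀ i, 0 ≤ ρ i)
    (hdisj : Pairwise (Function.onFun Disjoint fun i => closedBall (c i) (ρ i)))
    (V : Set ↥(sphere (0 : EuclideanSpace ℝ (Fin 3)) 1))
    (hV : V = Set.univ \ ⋃ i, closedBall (c i) (ρ i)) :
    (∀ (a : ↥(sphere (0 : EuclideanSpace ℝ (Fin 3)) 1)) (r : ℝ),
      (ball a r ∩ V).Nonempty → IsPathConnected (ball a r ∩ V)) ∧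
    (∀ (a : ↥(sphere (0 : EuclideanSpace ℝ (Fin 3)) 1)) (r : ℝ),
      (closedBall a r ∩ V).Nonempty → IsPathConnected (closedBall a r ∩ V)) ∧
    (∀ (a : ↥(sphere (0 : EuclideanSpace ℝ (Fin 3)) 1)) (r : ℝ) (x y),
      x ∈ V ∩ ball a r → y ∈ V ∩ ball a r →
      ∃ E : Set ↥(sphere (0 : EuclideanSpace ℝ (Fin 3)) 1),
        IsCompact E ∧ IsConnected E ∧ x ∈ E ∧ y ∈ E ∧ E ⊆ V ∩ ball a r) ∧
    (∀ (a : ↥(sphere (0 : EuclideanSpace ℝ (Fin 3)) 1)) (r : ℝ) (x y),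
      x ∈ V \ ball a r → y ∈ V \ ball a r →
      ∃ E : Set ↥(sphere (0 : EuclideanSpace ℝ (Fin 3)) 1),
        IsCompact E ∧ IsConnected E ∧ x ∈ E ∧ y ∈ E ∧ E ⊆ V \ ball a r) := by
  classical
  set t : Fin n → ℝ := fun i => 1 - ρ i ^ 2 / 2 with htdef
  have ht : ∀ i, t i ≤ 1 := by
    intro i
    have := sq_nonneg (ρ i)
    simp only [htdef]
    nlinarith
  have hcb : ∀ i, (closedBall (c i) (ρ i) : Set ↥S2) = Kset ((c i : E3)) (t i) :=
    fun i => cb_eq (c i) (hρ i)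
  have hd' : Pairwise (Function.onFun Disjoint fun i => Kset ((c i : E3)) (t i)) := by
    have hfun : (fun i => (closedBall (c i) (ρ i) : Set ↥S2)) =
        fun i => Kset ((c i : E3)) (t i) := funext hcb
    rwa [hfun] at hdisj
  have hVi : V = ⋂ i, (Kset ((c i : E3)) (t i))ᶜ := by
    rw [hV]
    have h1 : (⋃ i, (closedBall (c i) (ρ i) : Set ↥S2)) =
        ⋃ i, Kset ((c i : E3)) (t i) := iUnion_congr hcb
    rw [h1, ← Set.compl_eq_univ_diff, Set.compl_iUnion]
  -- part 1
  have part1 : ∀ (a : ↥S2) (r : ℝ),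
      (ball a r ∩ V).Nonempty → IsPathConnected (ball a r ∩ V) := by
    intro a r hne
    obtain ⟨x, hx⟩ := hne
    have hr : 0 < r := lt_of_le_of_lt dist_nonneg (mem_ball.mp hx.1)
    have hid : ball a r ∩ V = capSet true ((a : E3)) (1 - r ^ 2 / 2) ∩
        ⋂ i, (Kset ((c i : E3)) (t i))ᶜ := by rw [ball_eq a hr, hVi]
    rw [hid]
    exact main_ipc true ((a : E3)) (1 - r ^ 2 / 2) c t ht hd' (by rw [← hid]; exact ⟨x, hx⟩)
  -- part 2
  have part2 : ∀ (a : ↥S2) (r : ℝ),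
      (closedBall a r ∩ V).Nonempty → IsPathConnected (closedBall a r ∩ V) := by
    intro a r hne
    obtain ⟨x, hx⟩ := hne
    have hr : 0 ≤ r := le_trans dist_nonneg (mem_closedBall.mp hx.1)
    have hid : closedBall a r ∩ V = capSet false ((a : E3)) (1 - r ^ 2 / 2) ∩
        ⋂ i, (Kset ((c i : E3)) (t i))ᶜ := by
      rw [capSet_false_eq_Kset, ← cb_eq a hr, hVi]
    rw [hid]
    exact main_ipc false ((a : E3)) (1 - r ^ 2 / 2) c t ht hd' (by rw [← hid]; exact ⟨x, hx⟩)
  refine ⟨part1, part2, ?_, ?_⟩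
  · -- part 3
    intro a r x y hx hy
    rw [Set.inter_comm] at hx hy
    have hIPC := part1 a r ⟨x, hx⟩
    obtain ⟨E, h1, h2, h3, h4, h5⟩ := continuum_of_joined (hIPC.joinedIn x hx y hy)
    exact ⟨E, h1, h2, h3, h4, by rwa [Set.inter_comm] at h5⟩
  · -- part 4
    intro a r x y hx hy
    rcases le_or_gt r 0 with hr | hr
    · -- the ball is empty
      have hb : (ball a r : Set ↥S2) = ∅ := ball_eq_empty.mpr hr
      have hid : V \ ball a r = capSet false (-(a : E3)) (-3) ∩
          ⋂ i, (Kset ((c i : E3)) (t i))ᶜ := by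
        rw [hb, Set.diff_empty, hVi]
        have hcap : capSet false (-(a : E3)) (-3) = univ := by
          apply eq_univ_of_forall
          intro z
          show (-3 : ℝ) ≤ ⟪(z : E3), -(a : E3)⟫
          have habs := abs_real_inner_le_norm ((z : E3)) (-(a : E3))
          rw [sphere_norm_one, norm_neg, sphere_norm_one, one_mul] at habs
          have := (abs_le.mp habs).1
          linarith
        rw [hcap, Set.univ_inter]
      have hx' : x ∈ capSet false (-(a : E3)) (-3) ∩ ⋂ i, (Kset ((c i : E3)) (t i))ᶜ := by
        rw [← hid]; exact hx
      have hy' : y ∈ capSet false (-(a : E3)) (-3) ∩ ⋂ i, (Kset ((c i : E3)) (t i))ᶜ := by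
        rw [← hid]; exact hy
      have hJ := main_joined false (-(a : E3)) (-3) c t ht hd' hx' hy'
      rw [← hid] at hJ
      exact continuum_of_joined hJ
    · have hid : V \ ball a r = capSet false (-(a : E3)) (r ^ 2 / 2 - 1) ∩
          ⋂ i, (Kset ((c i : E3)) (t i))ᶜ := by
        ext z
        rw [Set.mem_diff, hVi, Set.mem_inter_iff, and_comm]
        exact and_congr (ball_compl_eq a hr z) Iff.rfl
      have hx' : x ∈ _ := (hid ▸ hx : x ∈ capSet false (-(a : E3)) (r ^ 2 / 2 - 1) ∩
        ⋂ i, (Kset ((c i : E3)) (t i))ᶜ)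
      have hy' : y ∈ _ := (hid ▸ hy : y ∈ capSet false (-(a : E3)) (r ^ 2 / 2 - 1) ∩
        ⋂ i, (Kset ((c i : E3)) (t i))ᶜ)
      have hJ := main_joined false (-(a : E3)) (r ^ 2 / 2 - 1) c t ht hd' hx' hy'
      rw [← hid] at hJ
      exact continuum_of_joined hJ
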